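/- arXiv:2508.13586 — 3 statements merged into one kernel-verified Lean document; each statement's English description precedes it below -/
import Mathlib

section
/- Let Fₙ denote the Fibonacci numbers (F₁ = F₂ = 1, F_{n+2} = F_{n+1} + Fₙ) and set φₙ = F_{n+1}/Fₙ as a real number. Then for every n ≥ 1 the tuple (αₙ, βₙ, γₙ, δₙ, εₙ) = (φ_{n+1}, φ_{n+1}, φₙ, φ_{n+2}φ_{n+1}/φₙ, φₙ) satisfies the Gauss–Napier equations: 1 + αₙ = γₙδₙ, 1 + βₙ = δₙεₙ, 1 + γₙ = εₙαₙ, 1 + δₙ = αₙβₙ, 1 + εₙ = βₙγₙ; moreover δₙ = F_{n+3}Fₙ/F_{n+1}². -/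
/-- The Fibonacci numbers viewed as real numbers: `F 1 = F 2 = 1`,
`F (n+2) = F (n+1) + F n`. -/
noncomputable def fibR (n : ℕ) : ℝ := (Nat.fib n : ℝ)

/-- `φₙ = F_{n+1}/Fₙ`, the `n`-th convergent of the golden ratio. -/
noncomputable def phiR (n : ℕ) : ℝ := fibR (n + 1) / fibR n

/-- For every `n ≥ 1` the tuple
`(αₙ, βₙ, γₙ, δₙ, εₙ) = (φ_{n+1}, φ_{n+1}, φₙ, φ_{n+2}φ_{n+1}/φₙ, φₙ)` satisfies the
Gauss–Napier equations, and moreover `δₙ = F_{n+3}Fₙ/F_{n+1}²`. -/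
theorem fibonacci_pentagram (n : ℕ) (hn : 1 ≤ n) :
    (1 + phiR (n + 1) = phiR n * (phiR (n + 2) * phiR (n + 1) / phiR n)) ∧
    (1 + phiR (n + 1) = (phiR (n + 2) * phiR (n + 1) / phiR n) * phiR n) ∧
    (1 + phiR n = phiR n * phiR (n + 1)) ∧
    (1 + phiR (n + 2) * phiR (n + 1) / phiR n = phiR (n + 1) * phiR (n + 1)) ∧
    (1 + phiR n = phiR (n + 1) * phiR n) ∧
    phiR (n + 2) * phiR (n + 1) / phiR n = fibR (n + 3) * fibR n / fibR (n + 1) ^ 2 := by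
  have hne : ∀ m : ℕ, 1 ≤ m → fibR m ≠ 0 := by
    intro m hm
    have : 0 < Nat.fib m := Nat.fib_pos.mpr (by omega)
    simp only [fibR]
    positivity
  have h1 : fibR n ≠ 0 := hne n hn
  have h2 : fibR (n + 1) ≠ 0 := hne _ (by omega)
  have h3 : fibR (n + 2) ≠ 0 := hne _ (by omega)
  have h4 : fibR (n + 3) ≠ 0 := hne _ (by omega)
  have r1 : fibR (n + 2) = fibR (n + 1) + fibR n := by
    simp only [fibR]
    push_cast [show n + 2 = n + 2 from rfl, Nat.fib_add_two]
    ring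
  have r2 : fibR (n + 3) = fibR (n + 2) + fibR (n + 1) := by
    simp only [fibR, show n + 3 = (n + 1) + 2 from rfl]
    push_cast [Nat.fib_add_two]
    ring
  simp only [phiR, show n + 1 + 1 = n + 2 from rfl, show n + 2 + 1 = n + 3 from rfl, r2, r1]
  set a := fibR n with ha
  set b := fibR (n + 1) with hb
  have h5 : b + a ≠ 0 := r1 ▸ h3
  refine ⟨?_, ?_, ?_, ?_, ?_, ?_⟩ <;> field_simp [r2, r1] <;> (first | ring1 | exact Or.inl (by ring))
end

section
/- Let Fₙ denote the Fibonacci numbers (F₁ = F₂ = 1, F_{n+2} = F_{n+1} + Fₙ) and ωₙ = F_{n+2}²·F_{n+3}/(F_{n+1}²·Fₙ) ∈ ℝ. Then for every n ≥ 1, the rational number t = F_{n+3}/(2F_{n+1}) is a root of the Gauss characteristic equation t(2t − 1)² = (t − 1)ωₙ. -/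
/-- For every `n ≥ 1`, the number `t = F_{n+3}/(2F_{n+1})` is a root of the
Gauss characteristic equation `t(2t − 1)² = (t − 1)ωₙ`, where
`ωₙ = F_{n+2}²·F_{n+3}/(F_{n+1}²·Fₙ)`. -/
theorem fibonacci_pentagram_rational_root (n : ℕ) (hn : 1 ≤ n)
    (ω t : ℝ)
    (hω : ω = fibR (n + 2) ^ 2 * fibR (n + 3) / (fibR (n + 1) ^ 2 * fibR n))
    (ht : t = fibR (n + 3) / (2 * fibR (n + 1))) :
    t * (2 * t - 1) ^ 2 = (t - 1) * ω := by
  have h0 : (0:ℝ) < fibR n := by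
    unfold fibR; exact_mod_cast Nat.fib_pos.mpr hn
  have h1 : (0:ℝ) < fibR (n + 1) := by
    simpa [fibR] using Nat.cast_pos.mpr (Nat.fib_pos.mpr (by omega))
  have hadd2 : fibR (n + 2) = fibR (n + 1) + fibR n := by
    simp [fibR, Nat.fib_add_two]; push_cast; ring
  have hadd3 : fibR (n + 3) = fibR (n + 2) + fibR (n + 1) := by
    have : n + 3 = (n + 1) + 2 := by ring
    rw [this]; simp [fibR, Nat.fib_add_two]; push_cast; ring
  subst hω ht
  rw [hadd3, hadd2]
  field_simp
  ring
end

section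
/- Let Fₙ denote the Fibonacci numbers (F₁ = F₂ = 1, F_{n+2} = F_{n+1} + Fₙ) and ωₙ = F_{n+2}²·F_{n+3}/(F_{n+1}²·Fₙ) ∈ ℝ. Then for every n ≥ 1 and every real t, one has the factorization t(2t − 1)² − (t − 1)ωₙ = (2t − F_{n+3}/F_{n+1})·(2t² + (Fₙ/F_{n+1})t − F_{n+1}/Fₙ − Fₙ/F_{n+1} − 2)/2 · 2, i.e. t(2t − 1)² − (t − 1)ωₙ = (t − F_{n+3}/(2F_{n+1}))·(4t² + 2(Fₙ/F_{n+1})t − 2F_{n+1}/Fₙ − 2Fₙ/F_{n+1} − 4). -/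
/-- For every `n ≥ 1` and every real `t`, with
`ωₙ = F_{n+2}²·F_{n+3}/(F_{n+1}²·Fₙ)`, one has the factorization
`t(2t − 1)² − (t − 1)ωₙ
  = (t − F_{n+3}/(2F_{n+1}))·(4t² + 2(Fₙ/F_{n+1})t − 2F_{n+1}/Fₙ − 2Fₙ/F_{n+1} − 4)`. -/
theorem fibonacci_pentagram_cubic_factorization (n : ℕ) (hn : 1 ≤ n)
    (ω : ℝ) (hω : ω = fibR (n + 2) ^ 2 * fibR (n + 3) / (fibR (n + 1) ^ 2 * fibR n))
    (t : ℝ) :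
    t * (2 * t - 1) ^ 2 - (t - 1) * ω =
      (t - fibR (n + 3) / (2 * fibR (n + 1))) *
        (4 * t ^ 2 + 2 * (fibR n / fibR (n + 1)) * t
          - 2 * (fibR (n + 1) / fibR n) - 2 * (fibR n / fibR (n + 1)) - 4) := by
  have ha : (0:ℝ) < fibR n := by
    unfold fibR; exact_mod_cast Nat.fib_pos.mpr hn
  have hb : (0:ℝ) < fibR (n + 1) := by
    unfold fibR; exact_mod_cast Nat.fib_pos.mpr (by omega)
  have h2 : fibR (n + 2) = fibR (n + 1) + fibR n := by
    unfold fibR; rw [Nat.fib_add_two]; push_cast; ring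
  have h3 : fibR (n + 3) = fibR (n + 2) + fibR (n + 1) := by
    unfold fibR; rw [show n + 3 = (n + 1) + 2 from rfl, Nat.fib_add_two]; push_cast; ring
  rw [hω, h3, h2]
  field_simp
  ring
end
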